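/- Let k be a commutative ring, A an associative unital k-algebra, λ ∈ k, and let d be a derivation of weight λ on A. Then for all a, b ∈ A and all n ∈ ℕ, the generalized Leibnitz rule holds: dⁿ(a·b) = Σ_{r+s+t=n} (n!/(r!·s!·t!)) · λ^t · d^{r+t}(a) · d^{s+t}(b), where the sum ranges over all triples (r,s,t) of natural numbers with r+s+t = n. -/

import Mathlib

section aux

variable {k A : Type*} [CommRing k] [Ring A] [Algebra k A]

private def S1 (k A : Type*) [CommRing k] [Ring A] [Algebra k A] :
    ((ℕ × ℕ) → A) →ₗ[k] ((ℕ × ℕ) → A) :=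
  LinearMap.funLeft k A (fun p => (p.1 + 1, p.2))

private def S2 (k A : Type*) [CommRing k] [Ring A] [Algebra k A] :
    ((ℕ × ℕ) → A) →ₗ[k] ((ℕ × ℕ) → A) :=
  LinearMap.funLeft k A (fun p => (p.1, p.2 + 1))

private lemma S1_pow_apply : ∀ (i : ℕ) (F : (ℕ × ℕ) → A) (p : ℕ × ℕ),
    ((S1 k A) ^ i) F p = F (p.1 + i, p.2) := by
  intro i
  induction i with
  | zero => intro F p; simp
  | succ i ih =>
      intro F p
      rw [pow_succ, Module.End.mul_apply, ih]
      show F _ = F _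
      congr 1

private lemma S2_pow_apply : ∀ (i : ℕ) (F : (ℕ × ℕ) → A) (p : ℕ × ℕ),
    ((S2 k A) ^ i) F p = F (p.1, p.2 + i) := by
  intro i
  induction i with
  | zero => intro F p; simp
  | succ i ih =>
      intro F p
      rw [pow_succ, Module.End.mul_apply, ih]
      show F _ = F _
      congr 1

private lemma S1_comm_S2 : Commute (S1 k A) (S2 k A) := by
  apply LinearMap.ext; intro F; funext p; rfl

private lemma tri_sum {β : Type*} [AddCommMonoid β] (n : ℕ) (g : ℕ → ℕ → β) :
    ∑ m ∈ Finset.range (n+1), ∑ r ∈ Finset.range (m+1), g m r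
    = ∑ r ∈ Finset.range (n+1), ∑ s ∈ Finset.range (n-r+1), g (r+s) r := by
  rw [Finset.sum_sigma', Finset.sum_sigma']
  refine Finset.sum_nbij' (fun x => ⟨x.2, x.1 - x.2⟩) (fun x => ⟨x.1 + x.2, x.1⟩)
    ?_ ?_ ?_ ?_ ?_
  · rintro ⟨m, r⟩ hx
    simp only [Finset.mem_sigma, Finset.mem_range] at hx ⊢
    omega
  · rintro ⟨r, s⟩ hx
    simp only [Finset.mem_sigma, Finset.mem_range] at hx ⊢
    omega
  · rintro ⟨m, r⟩ hx
    simp only [Finset.mem_sigma, Finset.mem_range] at hx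
    have h : r + (m - r) = m := by omega
    simp [h]
  · rintro ⟨r, s⟩ hx
    simp only [Finset.mem_sigma, Finset.mem_range] at hx
    have h : r + s - r = s := by omega
    simp [h]
  · rintro ⟨m, r⟩ hx
    simp only [Finset.mem_sigma, Finset.mem_range] at hx
    have : r + (m - r) = m := by omega
    simp [this]

private lemma coeff_eq (n r s : ℕ) (h : r + s ≤ n) :
    n.factorial / (r.factorial * s.factorial * (n - r - s).factorial)
    = n.choose (r + s) * (r + s).choose r := by
  set t := n - r - s with ht
  have h1 := Nat.choose_mul_factorial_mul_factorial h
  have h2 := Nat.choose_mul_factorial_mul_factorial (Nat.le_add_right r s)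
  have h3 : n - (r + s) = t := by omega
  have h4 : r + s - r = s := by omega
  rw [h3] at h1
  rw [h4] at h2
  have key : n.factorial
      = (n.choose (r + s) * (r + s).choose r) * (r.factorial * s.factorial * t.factorial) := by
    rw [← h1, ← h2]; ring
  rw [key, Nat.mul_div_cancel _ (by positivity)]

private lemma En_eval (lam : k) (n : ℕ) (F : (ℕ × ℕ) → A) :
    ((((S1 k A) + (S2 k A) + lam • ((S1 k A) * (S2 k A))) ^ n) F) (0, 0)
    = ∑ m ∈ Finset.range (n+1), ∑ r ∈ Finset.range (m+1),
        (n.choose m * m.choose r) • lam ^ (n - m) • F (r + (n - m), (m - r) + (n - m)) := by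
  have h12 : Commute (S1 k A) (S2 k A) := S1_comm_S2
  have hXY : Commute ((S1 k A) + (S2 k A)) (lam • ((S1 k A) * (S2 k A))) :=
    (((Commute.refl (S1 k A)).mul_right h12).add_left
      (h12.symm.mul_right (Commute.refl (S2 k A)))).smul_right lam
  rw [hXY.add_pow, LinearMap.sum_apply, Finset.sum_apply]
  refine Finset.sum_congr rfl fun m hm => ?_
  rw [Module.End.mul_apply, Module.End.mul_apply, Module.End.natCast_apply,
    map_nsmul, map_nsmul, Pi.smul_apply]
  rw [smul_pow, h12.mul_pow, LinearMap.smul_apply, map_smul, Pi.smul_apply]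
  rw [h12.add_pow, LinearMap.sum_apply, Finset.sum_apply, Finset.smul_sum, Finset.smul_sum]
  refine Finset.sum_congr rfl fun r hr => ?_
  rw [Module.End.mul_apply, Module.End.mul_apply, Module.End.natCast_apply,
    map_nsmul, map_nsmul, Pi.smul_apply]
  rw [Module.End.mul_apply, S1_pow_apply, S2_pow_apply, S1_pow_apply, S2_pow_apply]
  rw [mul_smul]
  rw [smul_comm ((m.choose r : ℕ)) (lam ^ (n - m))]
  norm_num

end aux

/-- generalized Leibnitz rule for a derivation of weight `lam`. -/
theorem generalized_leibnitz_rule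
    {k A : Type*} [CommRing k] [Ring A] [Algebra k A] (lam : k)
    (d : A →ₗ[k] A) (hd1 : d 1 = 0)
    (hd : ∀ a b : A, d (a * b) = d a * b + a * d b + lam • (d a * d b)) :
    ∀ (a b : A) (n : ℕ),
      (⇑d)^[n] (a * b) =
        ∑ p ∈ Finset.HasAntidiagonal.antidiagonal n, ∑ q ∈ Finset.HasAntidiagonal.antidiagonal p.2,
          (Nat.factorial n / (Nat.factorial p.1 * Nat.factorial q.1 * Nat.factorial q.2)) •
            lam ^ q.2 • ((⇑d)^[p.1 + q.2] a * (⇑d)^[q.1 + q.2] b) := by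
  intro a b n
  set E : ((ℕ × ℕ) → A) →ₗ[k] ((ℕ × ℕ) → A) :=
    (S1 k A) + (S2 k A) + lam • ((S1 k A) * (S2 k A)) with hE
  set F₀ : (ℕ × ℕ) → A := fun p => (⇑d)^[p.1] a * (⇑d)^[p.2] b with hF₀
  set Dh : ((ℕ × ℕ) → A) →ₗ[k] ((ℕ × ℕ) → A) := d.compLeft (ℕ × ℕ) with hDh
  have c1 : Commute Dh (S1 k A) := by
    apply LinearMap.ext; intro F; funext p; rfl
  have c2 : Commute Dh (S2 k A) := by
    apply LinearMap.ext; intro F; funext p; rfl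
  have hcomm : Commute Dh E :=
    (c1.add_right c2).add_right ((c1.mul_right c2).smul_right lam)
  have hDF : Dh F₀ = E F₀ := by
    funext p
    have l1 : Dh F₀ p = d ((⇑d)^[p.1] a * (⇑d)^[p.2] b) := rfl
    have l2 : E F₀ p = F₀ (p.1 + 1, p.2) + F₀ (p.1, p.2 + 1) + lam • F₀ (p.1 + 1, p.2 + 1) := rfl
    rw [l1, l2, hd]
    simp [hF₀, Function.iterate_succ_apply']
  have hiter : ∀ m : ℕ, (⇑d)^[m] (a * b) = (E ^ m) F₀ (0, 0) := by
    intro m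
    induction m with
    | zero => simp [hF₀]
    | succ m ih =>
        rw [Function.iterate_succ_apply', ih]
        have l1 : d ((E ^ m) F₀ (0, 0)) = Dh ((E ^ m) F₀) (0, 0) := rfl
        rw [l1, ← Module.End.mul_apply, (hcomm.pow_right m).eq, Module.End.mul_apply, hDF,
          ← Module.End.mul_apply, ← pow_succ]
  rw [hiter n, hE, En_eval, tri_sum]
  simp only [Finset.Nat.sum_antidiagonal_eq_sum_range_succ_mk]
  refine Finset.sum_congr rfl fun r hr => Finset.sum_congr rfl fun s hs => ?_
  simp only [Finset.mem_range] at hr hs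
  have h1 : n - (r + s) = n - r - s := by omega
  have h2 : r + s - r = s := by omega
  rw [h1, h2, ← coeff_eq n r s (by omega)]
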